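/- (Retraction Lemma) Let G be a group and let 0 → M →^{ι} N →^{π} P → 0 be a short exact sequence of ℤ[G]-modules such that: (1) M is finitely generated and equipped with a filling norm ‖·‖_M; (2) N is a free ℤ[G]-module with a fixed (possibly infinite) ℤ[G]-basis, equipped with the induced ℓ1-norm ‖·‖₁; (3) P is a projective ℤ[G]-module. Then there exist a ℤ[G]-module homomorphism ρ : N → M with ρ ∘ ι = id_M and a constant C > 0 such that ‖ρ(x)‖_M ≤ C·‖x‖₁ for all x ∈ N. -/

import Mathlib

/-- The ℓ1-norm on the free `ℤ[G]`-module `S →₀ ℤ[G]` with basis indexed by `S`,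
induced by the free `ℤ`-basis `{g • e_s}`: `‖x‖₁ = ∑_{s,g} |x_{s,g}|`. -/
noncomputable def l1Free {G : Type*} [Group G] {S : Type*}
    (x : S →₀ MonoidAlgebra ℤ G) : ℕ :=
  x.sum fun _ a => Finsupp.sum a.coeff fun _ z => z.natAbs

/-- The filling norm on `M` induced by a surjection `η` from a based finitely
generated free `ℤ[G]`-module: `‖m‖_η = min { ‖x‖₁ : η x = m }`. -/
noncomputable def fillNorm {G : Type*} [Group G] {r : ℕ}
    {M : Type*} [AddCommGroup M] [Module (MonoidAlgebra ℤ G) M]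
    (η : (Fin r →₀ MonoidAlgebra ℤ G) →ₗ[MonoidAlgebra ℤ G] M) (m : M) : ℕ :=
  sInf {n : ℕ | ∃ x, η x = m ∧ l1Free x = n}

/-! ### Auxiliary ℓ1-norm lemmas -/

/-- The ℓ1 norm of a finitely supported integer-valued function. -/
private noncomputable def n1 {α : Type*} (a : α →₀ ℤ) : ℕ :=
  a.sum fun _ z => z.natAbs

private lemma n1_eq_sum {α : Type*} (a : α →₀ ℤ) {s : Finset α}
    (h : a.support ⊆ s) : n1 a = ∑ g ∈ s, (a g).natAbs :=
  Finsupp.sum_of_support_subset a h _ (fun _ _ => rfl)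

private lemma n1_zero {α : Type*} : n1 (0 : α →₀ ℤ) = 0 := by
  simp [n1]

private lemma n1_single {α : Type*} (g : α) (z : ℤ) :
    n1 (Finsupp.single g z) = z.natAbs := by
  simp [n1, Finsupp.sum_single_index]

private lemma n1_add_le {α : Type*} (a b : α →₀ ℤ) :
    n1 (a + b) ≤ n1 a + n1 b := by
  classical
  rw [n1_eq_sum (a + b) (s := a.support ∪ b.support) Finsupp.support_add,
    n1_eq_sum a (s := a.support ∪ b.support) Finset.subset_union_left,
    n1_eq_sum b (s := a.support ∪ b.support) Finset.subset_union_right,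
    ← Finset.sum_add_distrib]
  exact Finset.sum_le_sum fun i _ => by
    simpa [Finsupp.add_apply] using Int.natAbs_add_le (a i) (b i)

private lemma n1_finsetSum_le {α β : Type*} (s : Finset β) (f : β → α →₀ ℤ) :
    n1 (∑ i ∈ s, f i) ≤ ∑ i ∈ s, n1 (f i) := by
  classical
  induction s using Finset.induction with
  | empty => simp [n1_zero]
  | insert _ _ h ih =>
    rw [Finset.sum_insert h, Finset.sum_insert h]
    exact le_trans (n1_add_le _ _) (Nat.add_le_add_left ih _)

private lemma n1_mul_le {G : Type*} [Group G] (a b : MonoidAlgebra ℤ G) :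
    n1 (a * b).coeff ≤ n1 a.coeff * n1 b.coeff := by
  classical
  rw [MonoidAlgebra.mul_def]
  unfold Finsupp.sum
  simp only [MonoidAlgebra.coeff_sum, MonoidAlgebra.coeff_single]
  calc n1 (∑ g ∈ a.coeff.support, ∑ h ∈ b.coeff.support,
        Finsupp.single (g * h) (a.coeff g * b.coeff h))
      ≤ ∑ g ∈ a.coeff.support, n1 (∑ h ∈ b.coeff.support,
        Finsupp.single (g * h) (a.coeff g * b.coeff h)) := n1_finsetSum_le _ _
    _ ≤ ∑ g ∈ a.coeff.support, ∑ h ∈ b.coeff.support,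
        n1 (Finsupp.single (g * h) (a.coeff g * b.coeff h)) :=
        Finset.sum_le_sum fun g _ => n1_finsetSum_le _ _
    _ = ∑ g ∈ a.coeff.support, ∑ h ∈ b.coeff.support, (a.coeff g).natAbs * (b.coeff h).natAbs := by
        simp only [n1_single, Int.natAbs_mul]
    _ = n1 a.coeff * n1 b.coeff := by
        rw [n1_eq_sum a.coeff (le_refl _), n1_eq_sum b.coeff (le_refl _),
          Finset.sum_mul_sum]

private lemma l1Free_eq {G : Type*} [Group G] {S : Type*}
    (x : S →₀ MonoidAlgebra ℤ G) : l1Free x = x.sum fun _ a => n1 a.coeff := rfl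

private lemma l1Free_zero {G : Type*} [Group G] {S : Type*} :
    l1Free (0 : S →₀ MonoidAlgebra ℤ G) = 0 := by
  simp [l1Free]

private lemma l1Free_eq_sum {G : Type*} [Group G] {S : Type*}
    (x : S →₀ MonoidAlgebra ℤ G) {s : Finset S} (h : x.support ⊆ s) :
    l1Free x = ∑ i ∈ s, n1 (x i).coeff := by
  rw [l1Free_eq]
  exact Finsupp.sum_of_support_subset x h _ (fun _ _ => n1_zero)

private lemma l1Free_add_le {G : Type*} [Group G] {S : Type*}
    (x y : S →₀ MonoidAlgebra ℤ G) :
    l1Free (x + y) ≤ l1Free x + l1Free y := by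
  classical
  rw [l1Free_eq_sum (x + y) (s := x.support ∪ y.support) Finsupp.support_add,
    l1Free_eq_sum x (s := x.support ∪ y.support) Finset.subset_union_left,
    l1Free_eq_sum y (s := x.support ∪ y.support) Finset.subset_union_right,
    ← Finset.sum_add_distrib]
  exact Finset.sum_le_sum fun i _ => by
    simpa [Finsupp.add_apply, MonoidAlgebra.coeff_add] using n1_add_le (x i).coeff (y i).coeff

private lemma l1Free_smul_le {G : Type*} [Group G] {S : Type*}
    (c : MonoidAlgebra ℤ G) (x : S →₀ MonoidAlgebra ℤ G) :
    l1Free (c • x) ≤ n1 c.coeff * l1Free x := by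
  rw [l1Free_eq_sum (c • x) (s := x.support) Finsupp.support_smul,
    l1Free_eq_sum x (le_refl _), Finset.mul_sum]
  exact Finset.sum_le_sum fun i _ => by
    simpa [Finsupp.smul_apply, smul_eq_mul] using n1_mul_le c (x i)

/-! ### Auxiliary filling-norm lemmas -/

section FillNorm

variable {G : Type*} [Group G] {r : ℕ}
  {M : Type*} [AddCommGroup M] [Module (MonoidAlgebra ℤ G) M]
  (η : (Fin r →₀ MonoidAlgebra ℤ G) →ₗ[MonoidAlgebra ℤ G] M)

private lemma fillNorm_le {x : Fin r →₀ MonoidAlgebra ℤ G} {m : M}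
    (h : η x = m) : fillNorm η m ≤ l1Free x :=
  Nat.sInf_le ⟨x, h, rfl⟩

private lemma fillNorm_spec (hη : Function.Surjective η) (m : M) :
    ∃ x, η x = m ∧ l1Free x = fillNorm η m := by
  have hne : {n : ℕ | ∃ x, η x = m ∧ l1Free x = n}.Nonempty := by
    obtain ⟨x, hx⟩ := hη m
    exact ⟨l1Free x, x, hx, rfl⟩
  exact Nat.sInf_mem hne

private lemma fillNorm_zero : fillNorm η (0 : M) = 0 :=
  Nat.le_zero.mp <| le_trans (fillNorm_le η (map_zero η)) (le_of_eq l1Free_zero)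

private lemma fillNorm_add_le (hη : Function.Surjective η) (m m' : M) :
    fillNorm η (m + m') ≤ fillNorm η m + fillNorm η m' := by
  obtain ⟨x, hx, hxn⟩ := fillNorm_spec η hη m
  obtain ⟨y, hy, hyn⟩ := fillNorm_spec η hη m'
  calc fillNorm η (m + m') ≤ l1Free (x + y) :=
        fillNorm_le η (by rw [map_add, hx, hy])
    _ ≤ l1Free x + l1Free y := l1Free_add_le x y
    _ = fillNorm η m + fillNorm η m' := by rw [hxn, hyn]

private lemma fillNorm_smul_le (hη : Function.Surjective η)
    (c : MonoidAlgebra ℤ G) (m : M) :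
    fillNorm η (c • m) ≤ n1 c.coeff * fillNorm η m := by
  obtain ⟨x, hx, hxn⟩ := fillNorm_spec η hη m
  calc fillNorm η (c • m) ≤ l1Free (c • x) :=
        fillNorm_le η (by rw [map_smul, hx])
    _ ≤ n1 c.coeff * l1Free x := l1Free_smul_le c x
    _ = n1 c.coeff * fillNorm η m := by rw [hxn]

private lemma fillNorm_sum_le (hη : Function.Surjective η)
    {β : Type*} (s : Finset β) (f : β → M) :
    fillNorm η (∑ i ∈ s, f i) ≤ ∑ i ∈ s, fillNorm η (f i) := by
  classical
  induction s using Finset.induction with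
  | empty => simp [fillNorm_zero]
  | insert _ _ h ih =>
    rw [Finset.sum_insert h, Finset.sum_insert h]
    exact le_trans (fillNorm_add_le η hη _ _) (Nat.add_le_add_left ih _)

end FillNorm

/-- The Retraction Lemma: given a short exact sequence `0 → M → N → P → 0` of
`ℤ[G]`-modules with `M` finitely generated carrying a filling norm, `N` free and
based carrying the induced ℓ1-norm, and `P` projective, there is a bounded
retraction `ρ : N → M`. -/
theorem retraction_lemma
    (G : Type*) [Group G] (S : Type*)
    (M P : Type*) [AddCommGroup M] [Module (MonoidAlgebra ℤ G) M]
    [AddCommGroup P] [Module (MonoidAlgebra ℤ G) P]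
    [Module.Finite (MonoidAlgebra ℤ G) M]
    [Module.Projective (MonoidAlgebra ℤ G) P]
    (r : ℕ)
    (ηM : (Fin r →₀ MonoidAlgebra ℤ G) →ₗ[MonoidAlgebra ℤ G] M)
    (hηM : Function.Surjective ηM)
    (ι : M →ₗ[MonoidAlgebra ℤ G] (S →₀ MonoidAlgebra ℤ G))
    (π : (S →₀ MonoidAlgebra ℤ G) →ₗ[MonoidAlgebra ℤ G] P)
    (hι : Function.Injective ι)
    (hexact : LinearMap.range ι = LinearMap.ker π)
    (hπ : Function.Surjective π) :
    ∃ ρ : (S →₀ MonoidAlgebra ℤ G) →ₗ[MonoidAlgebra ℤ G] M,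
      (∀ m : M, ρ (ι m) = m) ∧
      ∃ C : ℕ, 0 < C ∧ ∀ x : S →₀ MonoidAlgebra ℤ G,
        fillNorm ηM (ρ x) ≤ C * l1Free x := by
  classical
  set R := MonoidAlgebra ℤ G
  set N := S →₀ R
  -- split the sequence using projectivity of P
  obtain ⟨σ, hσ⟩ := Module.projective_lifting_property π LinearMap.id hπ
  have hσ' : ∀ p : P, π (σ p) = p := fun p => DFunLike.congr_fun hσ p
  -- τ = id - σ ∘ π  lands in range ι
  set τ : N →ₗ[R] N := LinearMap.id - σ ∘ₗ π with hτdef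
  have hτmem : ∀ x : N, τ x ∈ LinearMap.range ι := by
    intro x
    rw [hexact, LinearMap.mem_ker]
    simp [hτdef, hσ']
  -- unbounded retraction ρ₀
  set e : M ≃ₗ[R] LinearMap.range ι := LinearEquiv.ofInjective ι hι with hedef
  set ρ₀ : N →ₗ[R] M :=
    e.symm.toLinearMap ∘ₗ τ.codRestrict (LinearMap.range ι) hτmem with hρ₀def
  have hιρ₀ : ∀ x : N, ι (ρ₀ x) = τ x := by
    intro x
    have : e (ρ₀ x) = ⟨τ x, hτmem x⟩ := by
      simp [hρ₀def, LinearMap.codRestrict]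
    have h2 := congrArg (Subtype.val) this
    rwa [hedef, LinearEquiv.ofInjective_apply] at h2
  have hρ₀ι : ∀ m : M, ρ₀ (ι m) = m := by
    intro m
    apply hι
    rw [hιρ₀]
    have hπι : π (ι m) = 0 := by
      have : ι m ∈ LinearMap.ker π := hexact ▸ LinearMap.mem_range_self ι m
      exact this
    simp [hτdef, hπι]
  -- finite support set T containing the support of everything in range ι
  obtain ⟨F, hF⟩ := Module.Finite.fg_top (R := R) (M := M)
  set T : Finset S := F.sup fun m => (ι m).support with hTdef
  have hrangeT : LinearMap.range ι ≤ Finsupp.supported R R ↑T := by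
    rw [LinearMap.range_eq_map, ← hF, Submodule.map_span, Submodule.span_le]
    rintro _ ⟨m, hm, rfl⟩
    rw [SetLike.mem_coe, Finsupp.mem_supported]
    exact_mod_cast Finset.le_sup (f := fun m => (ι m).support)
      (Finset.mem_coe.mp hm)
  have hsupp : ∀ m : M, (ι m).support ⊆ T := by
    intro m
    have := hrangeT (LinearMap.mem_range_self ι m)
    rw [Finsupp.mem_supported] at this
    exact Finset.coe_subset.mp this
  -- the projection onto coordinates in T
  set q : N →ₗ[R] N :=
    Finsupp.lsum ℕ (fun s => if s ∈ T then Finsupp.lsingle s else 0) with hqdef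
  have hq_apply : ∀ x : N,
      q x = x.sum fun s a => if s ∈ T then Finsupp.single s a else 0 := by
    intro x
    rw [hqdef, Finsupp.lsum_apply]
    refine Finsupp.sum_congr fun s _ => ?_
    by_cases h : s ∈ T
    · rw [if_pos h, if_pos h]; rfl
    · rw [if_neg h, if_neg h]; rfl
  have hqι : ∀ m : M, q (ι m) = ι m := by
    intro m
    rw [hq_apply]
    rw [show ((ι m).sum fun s a => if s ∈ T then Finsupp.single s a else 0)
        = (ι m).sum fun s a => Finsupp.single s a from
      Finsupp.sum_congr fun s hs => if_pos (hsupp m hs)]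
    exact Finsupp.sum_single (ι m)
  have hq_single : ∀ (s : S) (a : R),
      q (Finsupp.single s a) = if s ∈ T then Finsupp.single s a else 0 := by
    intro s a
    rw [hq_apply, Finsupp.sum_single_index (by split <;> simp)]
  -- the bounded retraction
  refine ⟨ρ₀ ∘ₗ q, ?_, ?_⟩
  · intro m
    simp only [LinearMap.comp_apply]
    rw [hqι, hρ₀ι]
  · set C : ℕ :=
      (T.sup fun s => fillNorm ηM (ρ₀ (q (Finsupp.single s (1 : R))))) + 1
      with hCdef
    have hC : ∀ s : S,
        fillNorm ηM (ρ₀ (q (Finsupp.single s (1 : R)))) ≤ C := by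
      intro s
      by_cases h : s ∈ T
      · exact le_trans (Finset.le_sup (f := fun s =>
          fillNorm ηM (ρ₀ (q (Finsupp.single s (1 : R))))) h) (Nat.le_succ _)
      · rw [hq_single, if_neg h, map_zero, fillNorm_zero]
        exact Nat.zero_le _
    refine ⟨C, Nat.succ_pos _, ?_⟩
    intro x
    have hx : (ρ₀ ∘ₗ q) x =
        ∑ s ∈ x.support, (x s) • (ρ₀ (q (Finsupp.single s (1 : R)))) := by
      conv_lhs => rw [← Finsupp.sum_single x]
      rw [Finsupp.sum, map_sum]
      refine Finset.sum_congr rfl fun s _ => ?_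
      have h1 : (Finsupp.single s (x s) : S →₀ MonoidAlgebra ℤ G)
          = (x s) • Finsupp.single s (1 : MonoidAlgebra ℤ G) := by
        rw [Finsupp.smul_single', mul_one]
      rw [h1]
      simp only [LinearMap.comp_apply, map_smul]
    rw [hx]
    calc fillNorm ηM (∑ s ∈ x.support,
          (x s) • (ρ₀ (q (Finsupp.single s (1 : R)))))
        ≤ ∑ s ∈ x.support,
          fillNorm ηM ((x s) • (ρ₀ (q (Finsupp.single s (1 : R))))) :=
          fillNorm_sum_le ηM hηM _ _
      _ ≤ ∑ s ∈ x.support,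
          n1 (x s).coeff * fillNorm ηM (ρ₀ (q (Finsupp.single s (1 : R)))) :=
          Finset.sum_le_sum fun s _ => fillNorm_smul_le ηM hηM _ _
      _ ≤ ∑ s ∈ x.support, n1 (x s).coeff * C :=
          Finset.sum_le_sum fun s _ => Nat.mul_le_mul_left _ (hC s)
      _ = C * l1Free x := by
          rw [l1Free_eq_sum x (le_refl _), Finset.mul_sum]
          exact Finset.sum_congr rfl fun s _ => Nat.mul_comm _ _
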